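/- Let G be a finite, connected graph that is not balanced-bipartite, and let w ∈ Λ be a non-unstable equilibrium. Define f(v_1,…,v_m) = Σ_{{i,j}∈E} (w_i+w_j)/(v_i+v_j). Then f(v) ≥ N for all v ∈ Δ, with equality if and only if v = w. -/

import Mathlib

open MeasureTheory Filter Finset Topology

noncomputable section

namespace GPU

variable {m : ℕ}

/-- The vector field `F` of the ODE associated to the generalized Pólya urn,
`F_i(x) = -x_i + (1/N) ∑_{j ~ i} x_i/(x_i+x_j)` where `N` is the number of edges. -/
def polyaF (G : SimpleGraph (Fin m)) [DecidableRel G.Adj] (x : Fin m → ℝ) : Fin m → ℝ :=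
  fun i => -x i + (1 / (G.edgeFinset.card : ℝ)) * ∑ j ∈ G.neighborFinset i, x i / (x i + x j)

/-- The domain `Δ`. -/
def simplexDelta (G : SimpleGraph (Fin m)) (c : ℝ) : Set (Fin m → ℝ) :=
  {x | (∀ i, 0 ≤ x i) ∧ ∑ i, x i = 1 ∧ ∀ i j, G.Adj i j → c ≤ x i + x j}

/-- The equilibria set `Λ = {x ∈ Δ : F(x) = 0}`. -/
def equilibria (G : SimpleGraph (Fin m)) [DecidableRel G.Adj] (c : ℝ) : Set (Fin m → ℝ) :=
  {x | x ∈ simplexDelta G c ∧ polyaF G x = 0}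

/-- The Lyapunov function `L(v) = -∑ v_i + (1/N) ∑_{{i,j} ∈ E} log (v_i + v_j)`. -/
def polyaL (G : SimpleGraph (Fin m)) [DecidableRel G.Adj] (v : Fin m → ℝ) : ℝ :=
  -∑ i, v i + (1 / (G.edgeFinset.card : ℝ)) *
    ∑ e ∈ G.edgeFinset,
      Sym2.lift ⟨fun i j => Real.log (v i + v j), fun i j => by simp [add_comm]⟩ e

/-- The partial derivative `∂L/∂v_i = -1 + (1/N) ∑_{j ~ i} 1/(v_i+v_j)`. -/
def partialL (G : SimpleGraph (Fin m)) [DecidableRel G.Adj] (v : Fin m → ℝ) (i : Fin m) : ℝ :=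
  -1 + (1 / (G.edgeFinset.card : ℝ)) * ∑ j ∈ G.neighborFinset i, 1 / (v i + v j)

/-- The Jacobian matrix `JF(v)` of `F` at `v`. -/
def polyaJacobian (G : SimpleGraph (Fin m)) [DecidableRel G.Adj] (v : Fin m → ℝ) :
    Matrix (Fin m) (Fin m) ℝ :=
  Matrix.of fun i j => fderiv ℝ (fun x => polyaF G x i) v (Pi.single j 1)

/-- A point is unstable if its Jacobian matrix has an eigenvalue with strictly
positive real part. -/
def Unstable (G : SimpleGraph (Fin m)) [DecidableRel G.Adj] (v : Fin m → ℝ) : Prop :=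
  ∃ z : ℂ, z ∈ spectrum ℂ ((polyaJacobian G v).map Complex.ofReal) ∧ 0 < z.re

/-- `G` is balanced-bipartite if it admits a bipartition `V = A ∪ Aᶜ` with `#A = #Aᶜ`. -/
def BalancedBipartite (G : SimpleGraph (Fin m)) : Prop :=
  ∃ A : Finset (Fin m), (∀ i j, G.Adj i j → (i ∈ A ↔ j ∉ A)) ∧ A.card = Aᶜ.card

/-- The generalized Pólya urn process on `G`: at each step, for each edge `{i,j}` one
ball is added either to bin `i` or to bin `j`; conditionally on the past the ball goes
to `i` with probability `B_i(n)/(B_i(n)+B_j(n))` and the choices for distinct edges are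
conditionally independent (encoded by the product form of `condLaw`). -/
structure PolyaUrn (G : SimpleGraph (Fin m)) [DecidableRel G.Adj]
    (Ω : Type) [mΩ : MeasurableSpace Ω] (μ : Measure Ω) where
  /-- initial number of balls in each bin -/
  B₀ : Fin m → ℕ
  B₀_pos : ∀ i, 1 ≤ B₀ i
  /-- the filtration of the process -/
  ℱ : Filtration ℕ mΩ
  /-- `δ (n+1) i j` is the indicator that the ball added on edge `{i,j}` at step `n+1`
  goes to bin `i` -/
  δ : ℕ → Fin m → Fin m → Ω → ℕ
  /-- number of balls in each bin after step `n` -/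
  B : ℕ → Ω → Fin m → ℕ
  B_init : ∀ ω i, B 0 ω i = B₀ i
  B_step : ∀ n ω i, B (n + 1) ω i = B n ω i + ∑ j ∈ G.neighborFinset i, δ (n + 1) i j ω
  δ_sum : ∀ n i j ω, G.Adj i j → δ (n + 1) i j ω + δ (n + 1) j i ω = 1
  B_meas : ∀ n i, Measurable[ℱ n] fun ω => B n ω i
  δ_meas : ∀ n i j, Measurable[ℱ (n + 1)] fun ω => δ (n + 1) i j ω
  condLaw : ∀ n (s : Fin m → Fin m → ℕ),
    (μ[Set.indicator {ω | ∀ i j, G.Adj i j → i < j → δ (n + 1) i j ω = s i j}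
        (fun _ => (1 : ℝ)) | ℱ n])
      =ᵐ[μ] fun ω => ∏ i, ∏ j ∈ (G.neighborFinset i).filter (fun j => i < j),
        (if s i j = 1 then (B n ω i : ℝ) / ((B n ω i : ℝ) + (B n ω j : ℝ))
         else if s i j = 0 then (B n ω j : ℝ) / ((B n ω i : ℝ) + (B n ω j : ℝ)) else 0)

/-- The proportion of balls in each bin, `x_i(n) = B_i(n)/(N₀ + nN)`. -/
def PolyaUrn.x {G : SimpleGraph (Fin m)} [DecidableRel G.Adj] {Ω : Type}
    [mΩ : MeasurableSpace Ω] {μ : Measure Ω} (U : PolyaUrn G Ω μ) (n : ℕ) (ω : Ω) :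
    Fin m → ℝ :=
  fun i => (U.B n ω i : ℝ) / ((∑ j, U.B₀ j + n * G.edgeFinset.card : ℕ) : ℝ)

end GPU

namespace GPU

/-- `f(v) = ∑_{{i,j} ∈ E} (w_i + w_j)/(v_i + v_j)`. -/
def edgeRatioSum (G : SimpleGraph (Fin m)) [DecidableRel G.Adj]
    (w v : Fin m → ℝ) : ℝ :=
  ∑ e ∈ G.edgeFinset,
    Sym2.lift ⟨fun i j => (w i + w j) / (v i + v j), fun i j => by simp [add_comm]⟩ e

lemma sum_darts_eq (G : SimpleGraph (Fin m)) [DecidableRel G.Adj] (f : Fin m → Fin m → ℝ) :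
    ∑ d : G.Dart, f d.fst d.snd = ∑ i, ∑ j ∈ G.neighborFinset i, f i j := by
  classical
  rw [← Finset.sum_fiberwise_of_maps_to (fun (d : G.Dart) _ => Finset.mem_univ d.fst)
      (fun d => f d.fst d.snd)]
  refine Finset.sum_congr rfl fun i _ => ?_
  refine Finset.sum_bij' (fun d _ => d.snd)
    (fun j hj => (⟨(i, j), (G.mem_neighborFinset i j).1 hj⟩ : G.Dart)) ?_ ?_ ?_ ?_ ?_
  · intro d hd
    simp only [Finset.mem_filter, Finset.mem_univ, true_and] at hd
    rw [SimpleGraph.mem_neighborFinset]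
    exact hd ▸ d.adj
  · intro j hj
    simp
  · intro d hd
    simp only [Finset.mem_filter, Finset.mem_univ, true_and] at hd
    subst hd
    exact SimpleGraph.Dart.ext _ _ rfl
  · intro j hj
    rfl
  · intro d hd
    simp only [Finset.mem_filter, Finset.mem_univ, true_and] at hd
    rw [hd]


lemma sum_darts_eq_two_mul (G : SimpleGraph (Fin m)) [DecidableRel G.Adj]
    (f : Fin m → Fin m → ℝ) (hf : ∀ a b, f a b = f b a) :
    ∑ d : G.Dart, f d.fst d.snd = ∑ e ∈ G.edgeFinset, 2 * Sym2.lift ⟨f, hf⟩ e := by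
  classical
  rw [← Finset.sum_fiberwise_of_maps_to
      (fun (d : G.Dart) _ => (SimpleGraph.mem_edgeFinset).2 d.edge_mem)
      (fun d => f d.fst d.snd)]
  refine Finset.sum_congr rfl fun e he => ?_
  rw [SimpleGraph.mem_edgeFinset] at he
  induction e with
  | _ a b =>
    have hadj : G.Adj a b := he
    set d : G.Dart := ⟨(a, b), hadj⟩ with hd
    have hfib : (Finset.univ.filter fun d' : G.Dart => d'.edge = s(a, b)) = {d, d.symm} := by
      have := d.edge_fiber
      exact this
    rw [hfib, Finset.sum_pair (d.symm_ne.symm)]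
    have h1 : f d.fst d.snd = f a b := rfl
    have h2 : f d.symm.fst d.symm.snd = f b a := rfl
    rw [h1, h2, Sym2.lift_mk, hf b a]
    ring

lemma two_mul_edge_sum (G : SimpleGraph (Fin m)) [DecidableRel G.Adj]
    (f : Fin m → Fin m → ℝ) (hf : ∀ a b, f a b = f b a) :
    2 * ∑ e ∈ G.edgeFinset, Sym2.lift ⟨f, hf⟩ e = ∑ i, ∑ j ∈ G.neighborFinset i, f i j := by
  rw [Finset.mul_sum, ← sum_darts_eq_two_mul G f hf, sum_darts_eq G f]

lemma sum_nbhd_swap (G : SimpleGraph (Fin m)) [DecidableRel G.Adj] (h : Fin m → Fin m → ℝ) :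
    ∑ i, ∑ j ∈ G.neighborFinset i, h i j = ∑ i, ∑ j ∈ G.neighborFinset i, h j i := by
  classical
  have key : ∀ g : Fin m → Fin m → ℝ, ∀ i : Fin m,
      ∑ j ∈ G.neighborFinset i, g i j = ∑ j, if G.Adj i j then g i j else 0 := by
    intro g i
    rw [← Finset.sum_filter]
    apply Finset.sum_congr _ (fun _ _ => rfl)
    ext j; simp [SimpleGraph.mem_neighborFinset]
  calc ∑ i, ∑ j ∈ G.neighborFinset i, h i j
      = ∑ i, ∑ j, if G.Adj i j then h i j else 0 :=
        Finset.sum_congr rfl fun i _ => key h i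
    _ = ∑ j, ∑ i, if G.Adj i j then h i j else 0 := Finset.sum_comm
    _ = ∑ i, ∑ j, if G.Adj i j then h j i else 0 :=
        Finset.sum_congr rfl fun i _ => Finset.sum_congr rfl fun j _ =>
          if_congr (G.adj_comm j i) rfl rfl
    _ = ∑ i, ∑ j ∈ G.neighborFinset i, h j i :=
        (Finset.sum_congr rfl fun i _ => key (fun a b => h b a) i).symm


private def projR (m : ℕ) (k : Fin m) : (Fin m → ℝ) →L[ℝ] ℝ := ContinuousLinearMap.proj k

open Finset

lemma zero_row (G : SimpleGraph (Fin m)) [DecidableRel G.Adj] (w : Fin m → ℝ)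
    (i : Fin m) (hwi : w i = 0) (hpos : ∀ j ∈ G.neighborFinset i, 0 < w i + w j) (j' : Fin m) :
    polyaJacobian G w i j' =
      if j' = i then
        -1 + (1 / (G.edgeFinset.card : ℝ)) * ∑ j ∈ G.neighborFinset i, (w j)⁻¹
      else 0 := by
  classical
  set c₀ : ℝ := 1 / (G.edgeFinset.card : ℝ) with hc₀
  have hproj : ∀ k : Fin m, HasFDerivAt (fun x : Fin m → ℝ => x k)
      (projR m k) w := fun k => by exact (projR m k).hasFDerivAt
  set D : Fin m → ((Fin m → ℝ) →L[ℝ] ℝ) := fun j =>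
    w i • ((-(ContinuousLinearMap.mulLeftRight ℝ ℝ (w i + w j)⁻¹ (w i + w j)⁻¹)).comp
      (projR m i + projR m j))
    + (w i + w j)⁻¹ • projR m i with hD
  have hdiv : ∀ j ∈ G.neighborFinset i,
      HasFDerivAt (fun x : Fin m → ℝ => x i * (x i + x j)⁻¹) (D j) w := by
    intro j hj
    have hne : w i + w j ≠ 0 := ne_of_gt (hpos j hj)
    have hsum : HasFDerivAt (fun x : Fin m → ℝ => x i + x j)
        (projR m i + projR m j) w := (hproj i).add (hproj j)
    have hinv : HasFDerivAt (fun x : Fin m → ℝ => (x i + x j)⁻¹)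
        ((-(ContinuousLinearMap.mulLeftRight ℝ ℝ (w i + w j)⁻¹ (w i + w j)⁻¹)).comp
          (projR m i + projR m j)) w :=
      (hasFDerivAt_inv' (𝕜 := ℝ) hne).comp w hsum
    exact (hproj i).mul hinv
  have hF : HasFDerivAt (fun x : Fin m → ℝ => polyaF G x i)
      (-(projR m i) + c₀ • ∑ j ∈ G.neighborFinset i, D j) w := by
    have h1 : (fun x : Fin m → ℝ => polyaF G x i)
        = fun x => -x i + c₀ * ∑ j ∈ G.neighborFinset i, x i * (x i + x j)⁻¹ := by
      funext x
      simp [polyaF, div_eq_mul_inv, hc₀]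
    rw [h1]
    exact (hproj i).neg.add ((HasFDerivAt.fun_sum hdiv).const_mul c₀)
  have hMval : polyaJacobian G w i j' =
      (-(projR m i) + c₀ • ∑ j ∈ G.neighborFinset i, D j) (Pi.single j' 1) := by
    simp only [polyaJacobian, Matrix.of_apply]
    rw [hF.fderiv]
  rw [hMval]
  simp only [hD, ContinuousLinearMap.add_apply, ContinuousLinearMap.neg_apply,
    ContinuousLinearMap.smul_apply, ContinuousLinearMap.coe_sum', Finset.sum_apply,
    projR, ContinuousLinearMap.proj_apply, ContinuousLinearMap.comp_apply,
    ContinuousLinearMap.mulLeftRight_apply, smul_eq_mul, hwi, zero_mul, zero_add, mul_zero]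
  by_cases h : j' = i
  · subst h
    simp [Pi.single_eq_same]
  · simp [Pi.single_eq_of_ne (Ne.symm h), h]

lemma sum_inv_le_of_not_unstable (G : SimpleGraph (Fin m)) [DecidableRel G.Adj]
    (w : Fin m → ℝ) (hwu : ¬ Unstable G w) (i : Fin m) (hwi : w i = 0)
    (hpos : ∀ j ∈ G.neighborFinset i, 0 < w i + w j) :
    (1 / (G.edgeFinset.card : ℝ)) * ∑ j ∈ G.neighborFinset i, (w j)⁻¹ ≤ 1 := by
  classical
  by_contra hlt
  push_neg at hlt
  set lam : ℝ := -1 + (1 / (G.edgeFinset.card : ℝ)) * ∑ j ∈ G.neighborFinset i, (w j)⁻¹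
    with hlam
  have hlampos : 0 < lam := by rw [hlam]; linarith
  apply hwu
  refine ⟨(lam : ℂ), ?_, by simpa using hlampos⟩
  rw [spectrum.mem_iff]
  intro hunit
  rw [Matrix.isUnit_iff_isUnit_det] at hunit
  have hdet : (algebraMap ℂ (Matrix (Fin m) (Fin m) ℂ) lam
      - (polyaJacobian G w).map Complex.ofReal).det = 0 := by
    apply Matrix.det_eq_zero_of_row_eq_zero i
    intro j'
    simp only [Matrix.sub_apply, Matrix.algebraMap_matrix_apply, Matrix.map_apply]
    rw [zero_row G w i hwi hpos j']
    by_cases h : j' = i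
    · subst h
      simp [hlam]
    · simp [h, Ne.symm h]
  rw [hdet] at hunit
  exact (not_isUnit_zero : ¬ IsUnit (0 : ℂ)) hunit
lemma eq_of_edge_sums_eq (G : SimpleGraph (Fin m)) [DecidableRel G.Adj]
    (hconn : G.Connected) (hnbb : ¬ BalancedBipartite G) (v w : Fin m → ℝ)
    (hvsum : ∑ i, v i = 1) (hwsum : ∑ i, w i = 1)
    (hedge : ∀ a b, G.Adj a b → v a + v b = w a + w b) : v = w := by
  classical
  set u : Fin m → ℝ := fun i => v i - w i with hu
  have hflip : ∀ a b, G.Adj a b → u b = -u a := by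
    intro a b h
    have := hedge a b h
    simp only [hu]
    linarith
  have hm : Nonempty (Fin m) := hconn.nonempty
  obtain ⟨i₀⟩ := hm
  set a : ℝ := u i₀ with ha
  have hstep : ∀ x y : Fin m, G.Walk x y → (u x = a ∨ u x = -a) → (u y = a ∨ u y = -a) := by
    intro x y p
    induction p with
    | nil => exact id
    | cons h p ih =>
      intro hx
      apply ih
      rcases hx with h1 | h1
      · right; rw [hflip _ _ h, h1]
      · left; rw [hflip _ _ h, h1, neg_neg]
  have hpm : ∀ i, u i = a ∨ u i = -a := fun i =>
    hstep i₀ i (hconn.preconnected i₀ i).some (Or.inl rfl)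
  by_cases h0 : a = 0
  · funext i
    have hi := hpm i
    rw [h0, neg_zero, or_self] at hi
    have : v i - w i = 0 := hi
    linarith
  · exfalso
    apply hnbb
    refine ⟨Finset.univ.filter (fun i => u i = a), ?_, ?_⟩
    · intro i j hadj
      simp only [Finset.mem_filter, Finset.mem_univ, true_and]
      constructor
      · intro hi hj
        rw [hflip i j hadj, hi] at hj
        exact h0 (by linarith)
      · intro hj
        rcases hpm i with h' | h'
        · exact h'
        · exfalso
          apply hj
          rw [hflip i j hadj, h', neg_neg]
    · set A : Finset (Fin m) := Finset.univ.filter (fun i => u i = a) with hA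
      have hsum0 : ∑ i, u i = 0 := by
        simp only [hu, Finset.sum_sub_distrib, hvsum, hwsum, sub_self]
      rw [← Finset.sum_filter_add_sum_filter_not Finset.univ (fun i => u i = a)] at hsum0
      have hc : Finset.univ.filter (fun i => ¬ u i = a) = Aᶜ := by
        rw [hA, Finset.compl_filter]
      rw [hc, ← hA] at hsum0
      have h1 : ∑ i ∈ A, u i = (A.card : ℝ) * a := by
        have hval : ∀ i ∈ A, u i = a := by
          intro i hi
          rw [hA, Finset.mem_filter] at hi
          exact hi.2
        rw [Finset.sum_congr rfl hval, Finset.sum_const, nsmul_eq_mul]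
      have h2 : ∑ i ∈ Aᶜ, u i = -((Aᶜ.card : ℝ) * a) := by
        have hval : ∀ i ∈ Aᶜ, u i = -a := by
          intro i hi
          rcases hpm i with h' | h'
          · exfalso
            rw [hA, Finset.mem_compl, Finset.mem_filter] at hi
            exact hi ⟨Finset.mem_univ i, h'⟩
          · exact h'
        rw [Finset.sum_congr rfl hval, Finset.sum_const, nsmul_eq_mul]
        ring
      rw [h1, h2] at hsum0
      have : (A.card : ℝ) = (Aᶜ.card : ℝ) := by
        have hfac : ((A.card : ℝ) - (Aᶜ.card : ℝ)) * a = 0 := by linear_combination hsum0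
        rcases mul_eq_zero.1 hfac with h | h
        · linarith
        · exact absurd h h0
      exact_mod_cast this
lemma two_le_div_add_div {x y : ℝ} (hx : 0 < x) (hy : 0 < y) : 2 ≤ x / y + y / x := by
  rw [div_add_div _ _ hy.ne' hx.ne', le_div_iff₀ (by positivity)]
  nlinarith [sq_nonneg (x - y)]

lemma eq_of_div_add_div_eq_two {x y : ℝ} (hx : 0 < x) (hy : 0 < y)
    (h : x / y + y / x = 2) : x = y := by
  have h' : x * x + y * y = 2 * (y * x) := by
    field_simp at h
    linarith
  nlinarith [sq_nonneg (x - y)]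
lemma edgeRatioSum_self (G : SimpleGraph (Fin m)) [DecidableRel G.Adj] (u : Fin m → ℝ)
    (hu : ∀ a b, G.Adj a b → 0 < u a + u b) :
    edgeRatioSum G u u = (G.edgeFinset.card : ℝ) := by
  simp only [edgeRatioSum]
  have h1 : ∀ e ∈ G.edgeFinset,
      Sym2.lift ⟨fun i j => (u i + u j) / (u i + u j),
        fun i j => by simp [add_comm]⟩ e = 1 := by
    intro e he
    rw [SimpleGraph.mem_edgeFinset] at he
    induction e with
    | _ a b =>
      simp only [Sym2.lift_mk]
      exact div_self (hu a b he).ne'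
  rw [Finset.sum_congr rfl h1, Finset.sum_const, nsmul_eq_mul, mul_one]

/-- If `G` is finite, connected, not balanced-bipartite and `w ∈ Λ`
is a non-unstable equilibrium, then `f(v) = ∑_{{i,j} ∈ E} (w_i+w_j)/(v_i+v_j) ≥ N` for
every `v ∈ Δ`, with equality if and only if `v = w`. -/
theorem edgeRatioSum_ge_card_edges
    (m : ℕ) (G : SimpleGraph (Fin m)) [DecidableRel G.Adj]
    (hconn : G.Connected) (hnbb : ¬ BalancedBipartite G)
    (c : ℝ) (hc0 : 0 < c) (hc1 : c < 1 / (G.edgeFinset.card : ℝ))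
    (w : Fin m → ℝ) (hw : w ∈ equilibria G c) (hwu : ¬ Unstable G w) :
    ∀ v ∈ simplexDelta G c,
      (G.edgeFinset.card : ℝ) ≤ edgeRatioSum G w v ∧
      (edgeRatioSum G w v = (G.edgeFinset.card : ℝ) ↔ v = w) := by
  classical
  obtain ⟨⟨hw0, hwsum, hwc⟩, hweq⟩ := hw
  have hN : 0 < (G.edgeFinset.card : ℝ) := by
    rcases Nat.eq_zero_or_pos G.edgeFinset.card with h | h
    · rw [h] at hc1; norm_num at hc1; linarith
    · exact_mod_cast h
  have hwadj : ∀ i j, G.Adj i j → 0 < w i + w j := fun i j h =>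
    lt_of_lt_of_le hc0 (hwc i j h)
  -- the per-vertex quantity s i = ∑_{j ~ i} 1/(w i + w j)
  set s : Fin m → ℝ := fun i => ∑ j ∈ G.neighborFinset i, (w i + w j)⁻¹ with hs
  have hposnb : ∀ i, ∀ j ∈ G.neighborFinset i, 0 < w i + w j := fun i j hj =>
    hwadj i j ((G.mem_neighborFinset i j).1 hj)
  have hs_eq : ∀ i, w i ≠ 0 → s i = (G.edgeFinset.card : ℝ) := by
    intro i hne
    have h0 : polyaF G w i = 0 := congrFun hweq i
    simp only [polyaF] at h0
    have hsum : ∑ j ∈ G.neighborFinset i, w i / (w i + w j) = w i * s i := by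
      rw [hs, Finset.mul_sum]
      exact Finset.sum_congr rfl fun j _ => div_eq_mul_inv _ _
    rw [hsum] at h0
    have h2 : (1 / (G.edgeFinset.card : ℝ)) * (w i * s i) = w i := by linarith
    rw [one_div, inv_mul_eq_div, div_eq_iff hN.ne'] at h2
    have h1 : w i * s i = w i * (G.edgeFinset.card : ℝ) := by linarith
    exact mul_left_cancel₀ hne h1
  have hs_le : ∀ i, s i ≤ (G.edgeFinset.card : ℝ) := by
    intro i
    by_cases hne : w i = 0
    · have key := sum_inv_le_of_not_unstable G w hwu i hne (hposnb i)
      have hss : s i = ∑ j ∈ G.neighborFinset i, (w j)⁻¹ :=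
        Finset.sum_congr rfl fun j _ => by rw [hne, zero_add]
      rw [hss]
      rw [one_div, inv_mul_le_iff₀ hN] at key
      simpa using key
    · exact le_of_eq (hs_eq i hne)
  intro v hv
  obtain ⟨hv0, hvsum, hvc⟩ := hv
  have hvadj : ∀ i j, G.Adj i j → 0 < v i + v j := fun i j h =>
    lt_of_lt_of_le hc0 (hvc i j h)
  -- T2 = ∑_e (v_i+v_j)/(w_i+w_j) = ∑_i v_i s_i ≤ N
  have h2T2 : 2 * edgeRatioSum G v w
      = ∑ i, ∑ j ∈ G.neighborFinset i, (v i + v j) / (w i + w j) := by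
    simp only [edgeRatioSum]
    exact two_mul_edge_sum G (fun i j => (v i + v j) / (w i + w j))
      (fun i j => by simp [add_comm])
  have hsplit : ∑ i, ∑ j ∈ G.neighborFinset i, (v i + v j) / (w i + w j)
      = 2 * ∑ i, v i * s i := by
    have e1 : ∑ i, ∑ j ∈ G.neighborFinset i, (v i + v j) / (w i + w j)
        = (∑ i, ∑ j ∈ G.neighborFinset i, v i / (w i + w j))
          + ∑ i, ∑ j ∈ G.neighborFinset i, v j / (w i + w j) := by
      rw [← Finset.sum_add_distrib]
      refine Finset.sum_congr rfl fun i _ => ?_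
      rw [← Finset.sum_add_distrib]
      exact Finset.sum_congr rfl fun j _ => add_div _ _ _
    have e2 : ∑ i, ∑ j ∈ G.neighborFinset i, v j / (w i + w j)
        = ∑ i, ∑ j ∈ G.neighborFinset i, v i / (w i + w j) := by
      rw [sum_nbhd_swap G (fun i j => v j / (w i + w j))]
      exact Finset.sum_congr rfl fun i _ => Finset.sum_congr rfl fun j _ => by
        rw [add_comm (w j)]
    have e3 : ∑ i, ∑ j ∈ G.neighborFinset i, v i / (w i + w j) = ∑ i, v i * s i := by
      refine Finset.sum_congr rfl fun i _ => ?_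
      rw [hs, Finset.mul_sum]
      exact Finset.sum_congr rfl fun j _ => div_eq_mul_inv _ _
    rw [e1, e2, e3]
    ring
  have hT2 : edgeRatioSum G v w = ∑ i, v i * s i := by
    have := h2T2.trans hsplit
    linarith
  have hT2le : edgeRatioSum G v w ≤ (G.edgeFinset.card : ℝ) := by
    rw [hT2]
    calc ∑ i, v i * s i ≤ ∑ i, v i * (G.edgeFinset.card : ℝ) :=
          Finset.sum_le_sum fun i _ => mul_le_mul_of_nonneg_left (hs_le i) (hv0 i)
      _ = (G.edgeFinset.card : ℝ) := by rw [← Finset.sum_mul, hvsum, one_mul]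
  -- per-edge inequality
  have hper : ∀ e ∈ G.edgeFinset,
      (2 : ℝ) ≤ Sym2.lift ⟨fun i j => (w i + w j) / (v i + v j),
          fun i j => by simp [add_comm]⟩ e
        + Sym2.lift ⟨fun i j => (v i + v j) / (w i + w j),
          fun i j => by simp [add_comm]⟩ e := by
    intro e he
    rw [SimpleGraph.mem_edgeFinset] at he
    induction e with
    | _ a b =>
      simp only [Sym2.lift_mk]
      exact two_le_div_add_div (hwadj a b he) (hvadj a b he)
  have hsum_add : edgeRatioSum G w v + edgeRatioSum G v w
      = ∑ e ∈ G.edgeFinset,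
          (Sym2.lift ⟨fun i j => (w i + w j) / (v i + v j),
            fun i j => by simp [add_comm]⟩ e
          + Sym2.lift ⟨fun i j => (v i + v j) / (w i + w j),
            fun i j => by simp [add_comm]⟩ e) := by
    simp only [edgeRatioSum]
    rw [← Finset.sum_add_distrib]
  have h2N : 2 * (G.edgeFinset.card : ℝ) ≤ edgeRatioSum G w v + edgeRatioSum G v w := by
    rw [hsum_add]
    calc 2 * (G.edgeFinset.card : ℝ) = ∑ _e ∈ G.edgeFinset, (2 : ℝ) := by
          rw [Finset.sum_const, nsmul_eq_mul, mul_comm]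
      _ ≤ _ := Finset.sum_le_sum hper
  refine ⟨by linarith, ?_, ?_⟩
  · -- equality implies v = w
    intro heq
    have hzero : ∀ e ∈ G.edgeFinset,
        (Sym2.lift ⟨fun i j => (w i + w j) / (v i + v j),
            fun i j => by simp [add_comm]⟩ e
          + Sym2.lift ⟨fun i j => (v i + v j) / (w i + w j),
            fun i j => by simp [add_comm]⟩ e) - 2 = 0 := by
      have hnn : ∀ e ∈ G.edgeFinset,
          (0:ℝ) ≤ (Sym2.lift ⟨fun i j => (w i + w j) / (v i + v j),
              fun i j => by simp [add_comm]⟩ e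
            + Sym2.lift ⟨fun i j => (v i + v j) / (w i + w j),
              fun i j => by simp [add_comm]⟩ e) - 2 :=
        fun e he => sub_nonneg.2 (hper e he)
      have hsum0 : ∑ e ∈ G.edgeFinset,
          ((Sym2.lift ⟨fun i j => (w i + w j) / (v i + v j),
              fun i j => by simp [add_comm]⟩ e
            + Sym2.lift ⟨fun i j => (v i + v j) / (w i + w j),
              fun i j => by simp [add_comm]⟩ e) - 2) = 0 := by
        have hle : ∑ e ∈ G.edgeFinset,
            ((Sym2.lift ⟨fun i j => (w i + w j) / (v i + v j),
                fun i j => by simp [add_comm]⟩ e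
              + Sym2.lift ⟨fun i j => (v i + v j) / (w i + w j),
                fun i j => by simp [add_comm]⟩ e) - 2) ≤ 0 := by
          rw [Finset.sum_sub_distrib, ← hsum_add, Finset.sum_const, nsmul_eq_mul, heq]
          linarith
        have hge : (0:ℝ) ≤ ∑ e ∈ G.edgeFinset,
            ((Sym2.lift ⟨fun i j => (w i + w j) / (v i + v j),
                fun i j => by simp [add_comm]⟩ e
              + Sym2.lift ⟨fun i j => (v i + v j) / (w i + w j),
                fun i j => by simp [add_comm]⟩ e) - 2) := Finset.sum_nonneg hnn
        linarith
      exact fun e he => (Finset.sum_eq_zero_iff_of_nonneg hnn).1 hsum0 e he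
    have hedge : ∀ a b, G.Adj a b → v a + v b = w a + w b := by
      intro a b hab
      have he : s(a, b) ∈ G.edgeFinset := SimpleGraph.mem_edgeFinset.2 hab
      have := hzero _ he
      simp only [Sym2.lift_mk] at this
      have h2 : (w a + w b) / (v a + v b) + (v a + v b) / (w a + w b) = 2 := by linarith
      exact (eq_of_div_add_div_eq_two (hwadj a b hab) (hvadj a b hab) h2).symm
    exact eq_of_edge_sums_eq G hconn hnbb v w hvsum hwsum hedge
  · -- v = w implies equality
    rintro rfl
    exact edgeRatioSum_self G _ (fun a b hab => lt_of_lt_of_le hc0 (hwc a b hab))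

end GPU
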